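/- arXiv:1804.01207 — 2 statements merged into one kernel-verified Lean document; each statement's English description precedes it below -/
import Mathlib

section
/- (Sub-moment minimality of the two-value profile, binary case) Let m₁ ≥ m₂ ≥ 1 be natural numbers, N = m₁ + m₂, and consider the binary alphabet {a₁, a₂} with multiplicities m₁, m₂. Let a be either symbol, with multiplicity m(a), and suppose m(a) ∤ N; set ℓ = ⌊N/m(a)⌋ and u = ⌈N/m(a)⌉. Then (i) there exists an admissible cycle C : ZMod N → {a₁, a₂} in which exactly m(a)·u − N instances of a have distance ℓ and exactly N − m(a)·ℓ instances of a have distance u; and (ii) any admissible cycle C with this property minimizes ∑_{j : C(j) = a} Δ_C(j)² over all admissible cycles, i.e., for every admissible cycle C', ∑_{j : C'(j) = a} Δ_{C'}(j)² ≥ ∑_{j : C(j) = a} Δ_C(j)². -/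
open Finset

/-- The distance from position `j` to the next occurrence of the same symbol:
the least positive `d` with `C (j + d) = C j`. -/
noncomputable def cycleDist {N : ℕ} {A : Type*} (C : ZMod N → A) (j : ZMod N) : ℕ :=
  sInf {d : ℕ | 0 < d ∧ C (j + (d : ZMod N)) = C j}

/-- A cycle is admissible for multiplicities `m` if every fiber has the prescribed size. -/
def Admissible {N : ℕ} [NeZero N] {A : Type*} [Fintype A] [DecidableEq A]
    (m : A → ℕ) (C : ZMod N → A) : Prop :=
  ∀ a : A, (Finset.univ.filter (fun j => C j = a)).card = m a

/-- The mean of a cycle. -/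
noncomputable def cycleMean {N : ℕ} [NeZero N] {A : Type*} (C : ZMod N → A) : ℚ :=
  (∑ j : ZMod N, (cycleDist C j : ℚ)) / N

/-- The second (raw) moment of a cycle. -/
noncomputable def cycleMoment2 {N : ℕ} [NeZero N] {A : Type*} (C : ZMod N → A) : ℚ :=
  (∑ j : ZMod N, (cycleDist C j : ℚ) ^ 2) / N

/-- The variance of a cycle. -/
noncomputable def cycleVariance {N : ℕ} [NeZero N] {A : Type*} (C : ZMod N → A) : ℚ :=
  (∑ j : ZMod N, ((cycleDist C j : ℚ) - cycleMean C) ^ 2) / N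

section basic
variable {N : ℕ} [NeZero N] {A : Type*} (C : ZMod N → A)

lemma cycleDist_mem (j : ZMod N) :
    0 < cycleDist C j ∧ C (j + (cycleDist C j : ZMod N)) = C j := by
  have hN : 0 < N := Nat.pos_of_ne_zero (NeZero.ne N)
  have hmem : N ∈ {d : ℕ | 0 < d ∧ C (j + (d : ZMod N)) = C j} := by
    refine ⟨hN, ?_⟩
    simp [ZMod.natCast_self]
  exact Nat.sInf_mem ⟨N, hmem⟩

lemma cycleDist_pos (j : ZMod N) : 0 < cycleDist C j := (cycleDist_mem C j).1

lemma cycleDist_add (j : ZMod N) : C (j + (cycleDist C j : ZMod N)) = C j :=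
  (cycleDist_mem C j).2

lemma cycleDist_min (j : ZMod N) {d : ℕ} (hd : 0 < d)
    (h : C (j + (d : ZMod N)) = C j) : cycleDist C j ≤ d :=
  Nat.sInf_le ⟨hd, h⟩

lemma cycleDist_le_card (j : ZMod N) : cycleDist C j ≤ N :=
  cycleDist_min C j (Nat.pos_of_ne_zero (NeZero.ne N)) (by simp [ZMod.natCast_self])

end basic

section gaps
variable {N : ℕ} [NeZero N] {A : Type*} [DecidableEq A] (C : ZMod N → A)

/-- The interval of positions covered by an occurrence. -/
noncomputable def gapInterval (s : ZMod N) : Finset (ZMod N) :=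
  (Finset.range (cycleDist C s)).image (fun k : ℕ => s + (k : ZMod N))

lemma natCast_inj_of_lt {k₁ k₂ : ℕ} (h₁ : k₁ < N) (h₂ : k₂ < N)
    (h : (k₁ : ZMod N) = (k₂ : ZMod N)) : k₁ = k₂ := by
  have := congrArg ZMod.val h
  rwa [ZMod.val_natCast_of_lt h₁, ZMod.val_natCast_of_lt h₂] at this

lemma card_gapInterval (s : ZMod N) : (gapInterval C s).card = cycleDist C s := by
  rw [gapInterval, Finset.card_image_of_injOn, Finset.card_range]
  intro k₁ h₁ k₂ h₂ h
  simp only [Finset.coe_range, Set.mem_Iio] at h₁ h₂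
  have hle := cycleDist_le_card C s
  exact natCast_inj_of_lt (h₁.trans_le hle) (h₂.trans_le hle) (by
    have := add_left_cancel h
    exact this)

lemma gapInterval_cover (a : A) (hne : ∃ s, C s = a) (j : ZMod N) :
    ∃ s, C s = a ∧ j ∈ gapInterval C s := by
  obtain ⟨s₀, hs₀⟩ := hne
  set T : Set ℕ := {k : ℕ | C (j - (k : ZMod N)) = a} with hT
  have hTne : T.Nonempty := by
    refine ⟨(j - s₀).val, ?_⟩
    show C (j - ((j - s₀).val : ZMod N)) = a
    rw [ZMod.natCast_rightInverse (j - s₀)]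
    simpa using hs₀
  set k := sInf T with hk
  have hkmem : C (j - (k : ZMod N)) = a := Nat.sInf_mem hTne
  set s := j - (k : ZMod N) with hs
  have hjs : j = s + (k : ZMod N) := by rw [hs]; ring
  have hklt : k < cycleDist C s := by
    by_contra hcon
    push_neg at hcon
    set d := cycleDist C s with hd
    have hd0 : 0 < d := cycleDist_pos C s
    have hCd : C (s + (d : ZMod N)) = C s := cycleDist_add C s
    have : (k - d : ℕ) ∈ T := by
      show C (j - ((k - d : ℕ) : ZMod N)) = a
      have : j - ((k - d : ℕ) : ZMod N) = s + (d : ZMod N) := by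
        rw [Nat.cast_sub hcon, hs]; ring
      rw [this, hCd]; exact hkmem
    have := Nat.sInf_le this
    omega
  exact ⟨s, by rw [← hkmem], by
    rw [gapInterval, Finset.mem_image]
    exact ⟨k, Finset.mem_range.mpr hklt, hjs.symm⟩⟩

lemma gapInterval_disjoint_aux {s s' : ZMod N} (hC : C s = C s') (hne : s ≠ s')
    {k k' : ℕ} (hk : k < cycleDist C s) (hk' : k' < cycleDist C s')
    (heq : s + (k : ZMod N) = s' + (k' : ZMod N)) (hle : k' ≤ k) : False := by
  have hkk' : k ≠ k' := by
    rintro rfl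
    exact hne (by simpa using add_right_cancel heq)
  have hlt : 0 < k - k' := by omega
  have hs' : s + ((k - k' : ℕ) : ZMod N) = s' := by
    rw [Nat.cast_sub hle]
    have : s + (k : ZMod N) - (k' : ZMod N) = s' := by rw [heq]; ring
    rw [← this]; ring
  have : cycleDist C s ≤ k - k' := cycleDist_min C s hlt (by rw [hs', ← hC])
  omega

lemma gapInterval_disjoint {s s' : ZMod N} (hC : C s = C s') (hne : s ≠ s') :
    Disjoint (gapInterval C s) (gapInterval C s') := by
  rw [Finset.disjoint_left]
  intro j hj hj'
  rw [gapInterval, Finset.mem_image] at hj hj'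
  obtain ⟨k, hk, rfl⟩ := hj
  obtain ⟨k', hk', heq⟩ := hj'
  rw [Finset.mem_range] at hk hk'
  rcases le_total k' k with h | h
  · exact gapInterval_disjoint_aux C hC hne hk hk' heq.symm h
  · exact gapInterval_disjoint_aux C hC.symm hne.symm hk' hk heq h

lemma sum_cycleDist_fiber (a : A) (hne : ∃ s, C s = a) :
    ∑ j ∈ Finset.univ.filter (fun j => C j = a), cycleDist C j = N := by
  set S := Finset.univ.filter (fun j => C j = a) with hS
  have hdisj : ∀ s ∈ S, ∀ s' ∈ S, s ≠ s' → Disjoint (gapInterval C s) (gapInterval C s') := by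
    intro s hs s' hs' hne'
    rw [hS, Finset.mem_filter] at hs hs'
    exact gapInterval_disjoint C (hs.2.trans hs'.2.symm) hne'
  have hcover : S.biUnion (gapInterval C) = Finset.univ := by
    apply Finset.eq_univ_of_forall
    intro j
    obtain ⟨s, hsa, hj⟩ := gapInterval_cover C a hne j
    exact Finset.mem_biUnion.mpr ⟨s, by simp [hS, hsa], hj⟩
  calc ∑ j ∈ S, cycleDist C j = ∑ j ∈ S, (gapInterval C j).card := by
        simp [card_gapInterval]
    _ = (S.biUnion (gapInterval C)).card := (Finset.card_biUnion hdisj).symm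
    _ = N := by rw [hcover, Finset.card_univ, ZMod.card]

end gaps

/-- Convexity bound over the integers. -/
lemma sum_sq_ge {α : Type*} (T : Finset α) (f : α → ℕ) (ℓ : ℕ) :
    (2 * (ℓ:ℤ) + 1) * (∑ j ∈ T, (f j : ℤ)) - T.card * (ℓ * (ℓ + 1)) ≤
      ∑ j ∈ T, (f j : ℤ) ^ 2 := by
  have key : 0 ≤ ∑ j ∈ T, ((f j : ℤ) - ℓ) * ((f j : ℤ) - ℓ - 1) := by
    apply Finset.sum_nonneg
    intro j _
    rcases le_or_gt ((f j : ℤ)) ℓ with h | h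
    · nlinarith
    · nlinarith
  have expand : ∑ j ∈ T, ((f j : ℤ) - ℓ) * ((f j : ℤ) - ℓ - 1)
      = (∑ j ∈ T, (f j : ℤ)^2) - (2*(ℓ:ℤ)+1) * (∑ j ∈ T, (f j : ℤ)) + T.card * ((ℓ:ℤ) * (ℓ+1)) := by
    have h1 : (T.card : ℤ) * ((ℓ:ℤ)*((ℓ:ℤ)+1)) = ∑ _j ∈ T, ((ℓ:ℤ)*((ℓ:ℤ)+1)) := by
      rw [Finset.sum_const, nsmul_eq_mul]
    rw [h1, Finset.mul_sum, ← Finset.sum_sub_distrib, ← Finset.sum_add_distrib]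
    exact Finset.sum_congr rfl fun j _ => by ring
  linarith [key, expand.symm.trans rfl]


def profFun (ℓ r : ℕ) : ℕ → ℕ := fun i => i * ℓ + min i r

lemma exists_profile (N m ℓ r : ℕ) [NeZero N]
    (hN : N = m * ℓ + r) (hr0 : 0 < r) (hrm : r < m) (hℓ : 1 ≤ ℓ)
    (a b : Fin 2) (hab : a ≠ b) :
    ∃ C : ZMod N → Fin 2,
      (Finset.univ.filter (fun j => C j = a)).card = m ∧
      (Finset.univ.filter (fun j => C j = b)).card = N - m ∧
      (Finset.univ.filter (fun j => C j = a ∧ cycleDist C j = ℓ)).card = m - r ∧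
      (Finset.univ.filter (fun j => C j = a ∧ cycleDist C j = ℓ + 1)).card = r := by
  classical
  set p : ℕ → ℕ := profFun ℓ r with hp
  have hpm : p m = N := by
    rw [hp, profFun, min_eq_right (le_of_lt hrm)]; omega
  have hmono : StrictMono p := strictMono_nat_of_lt_succ (fun i => by
    rw [hp]
    simp only [profFun]
    have h : (i+1) * ℓ = i * ℓ + ℓ := by ring
    omega)
  have hplt : ∀ i, i < m → p i < N := fun i hi => hpm ▸ hmono hi
  set C : ZMod N → Fin 2 :=
    fun j => if ∃ i ∈ Finset.range m, ((p i : ℕ) : ZMod N) = j then a else b with hC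
  have hfiber : ∀ j : ZMod N, C j = a ↔ ∃ i ∈ Finset.range m, ((p i : ℕ) : ZMod N) = j := by
    intro j
    constructor
    · intro h
      by_contra hcon
      rw [hC] at h
      simp only [if_neg hcon] at h
      exact hab h.symm
    · intro h; rw [hC]; simp only [if_pos h]
  have hinj : Set.InjOn (fun i : ℕ => ((p i : ℕ) : ZMod N)) (Finset.range m : Set ℕ) := by
    intro i hi i' hi' h
    simp only [Finset.coe_range, Set.mem_Iio] at hi hi'
    exact hmono.injective (natCast_inj_of_lt (hplt _ hi) (hplt _ hi') h)
  have hfiber_eq : Finset.univ.filter (fun j => C j = a)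
      = (Finset.range m).image (fun i => ((p i : ℕ) : ZMod N)) := by
    ext j
    simp only [Finset.mem_filter, Finset.mem_univ, true_and, Finset.mem_image, hfiber]
  have hcard_a : (Finset.univ.filter (fun j => C j = a)).card = m := by
    rw [hfiber_eq, Finset.card_image_of_injOn hinj, Finset.card_range]
  have hfiber_b : ∀ j, C j = b ↔ ¬ (C j = a) := by
    intro j
    simp only [hC]
    split_ifs with h
    · simp [hab]
    · simp [Ne.symm hab]
  have hcard_b : (Finset.univ.filter (fun j => C j = b)).card = N - m := by
    have he : Finset.univ.filter (fun j => C j = b)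
        = Finset.univ \ Finset.univ.filter (fun j => C j = a) := by
      rw [← Finset.filter_not]
      exact Finset.filter_congr (fun j _ => by rw [hfiber_b j])
    rw [he, Finset.card_sdiff_of_subset (Finset.filter_subset _ _), hcard_a,
      Finset.card_univ, ZMod.card]
  -- cycleDist at each occurrence
  have hdist : ∀ i, i < m → cycleDist C ((p i : ℕ) : ZMod N) = p (i+1) - p i := by
    intro i hi
    set j := ((p i : ℕ) : ZMod N) with hj
    have hstep : p i < p (i+1) := hmono (Nat.lt_succ_self i)
    have hja : C j = a := (hfiber j).2 ⟨i, Finset.mem_range.mpr hi, rfl⟩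
    have hple : p (i+1) ≤ N := hpm ▸ hmono.monotone (by omega)
    apply le_antisymm
    · apply cycleDist_min
      · omega
      · have h1 : j + ((p (i+1) - p i : ℕ) : ZMod N) = ((p (i+1) : ℕ) : ZMod N) := by
          rw [hj, ← Nat.cast_add, Nat.add_sub_cancel' (le_of_lt hstep)]
        rw [h1, hja]
        rcases Nat.lt_or_ge (i+1) m with h | h
        · exact (hfiber _).2 ⟨i+1, Finset.mem_range.mpr h, rfl⟩
        · have him : i + 1 = m := by omega
          rw [him, hpm]
          have h0 : ((N : ℕ) : ZMod N) = ((p 0 : ℕ) : ZMod N) := by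
            have : p 0 = 0 := by rw [hp]; simp [profFun]
            rw [this]
            simp [ZMod.natCast_self]
          rw [h0]
          exact (hfiber _).2 ⟨0, Finset.mem_range.mpr (by omega), rfl⟩
    · by_contra hcon
      push_neg at hcon
      set d := cycleDist C j with hd
      have hd0 : 0 < d := cycleDist_pos C j
      have hCd : C (j + (d : ZMod N)) = C j := cycleDist_add C j
      have hlt : p i + d < N := by omega
      have hcast : j + (d : ZMod N) = ((p i + d : ℕ) : ZMod N) := by
        rw [hj]
        exact (Nat.cast_add _ _).symm
      rw [hcast, hja] at hCd
      obtain ⟨i', hi', hpi'⟩ := (hfiber _).1 hCd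
      rw [Finset.mem_range] at hi'
      have heq : p i' = p i + d := natCast_inj_of_lt (hplt _ hi') hlt hpi'
      have h1 : i < i' := hmono.lt_iff_lt.mp (by omega)
      have h2 : i' < i + 1 := hmono.lt_iff_lt.mp (by omega)
      omega
  -- the filtered sets
  have hset : ∀ v : ℕ, Finset.univ.filter (fun j => C j = a ∧ cycleDist C j = v)
      = ((Finset.range m).filter (fun i => p (i+1) - p i = v)).image
          (fun i => ((p i : ℕ) : ZMod N)) := by
    intro v
    ext j
    simp only [Finset.mem_filter, Finset.mem_univ, true_and, Finset.mem_image,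
      Finset.mem_range]
    constructor
    · rintro ⟨hja, hdv⟩
      obtain ⟨i, hi, rfl⟩ := (hfiber j).1 hja
      rw [Finset.mem_range] at hi
      exact ⟨i, ⟨hi, by rw [← hdv, hdist i hi]⟩, rfl⟩
    · rintro ⟨i, ⟨hi, hgap⟩, rfl⟩
      exact ⟨(hfiber _).2 ⟨i, Finset.mem_range.mpr hi, rfl⟩, by rw [hdist i hi, hgap]⟩
  have hcard_set : ∀ v : ℕ,
      (Finset.univ.filter (fun j => C j = a ∧ cycleDist C j = v)).card
        = ((Finset.range m).filter (fun i => p (i+1) - p i = v)).card := by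
    intro v
    rw [hset v]
    exact Finset.card_image_of_injOn (hinj.mono (by
      intro x hx
      simp only [Finset.coe_filter, Set.mem_setOf_eq] at hx
      simp only [Finset.coe_range, Set.mem_Iio]
      exact Finset.mem_range.mp hx.1))
  have hgapval : ∀ i, p (i+1) - p i = if i < r then ℓ + 1 else ℓ := by
    intro i
    rw [hp]
    simp only [profFun]
    have h : (i+1) * ℓ = i * ℓ + ℓ := by ring
    split_ifs with h2 <;> omega
  have hcount_ℓ : ((Finset.range m).filter (fun i => p (i+1) - p i = ℓ)).card = m - r := by
    have he : (Finset.range m).filter (fun i => p (i+1) - p i = ℓ) = Finset.Ico r m := by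
      ext i
      simp only [Finset.mem_filter, Finset.mem_range, Finset.mem_Ico, hgapval]
      constructor
      · rintro ⟨h1, h2⟩
        split_ifs at h2 with h3 <;> omega
      · rintro ⟨h1, h2⟩
        refine ⟨h2, ?_⟩
        rw [if_neg (by omega)]
    rw [he, Nat.card_Ico]
  have hcount_u : ((Finset.range m).filter (fun i => p (i+1) - p i = ℓ + 1)).card = r := by
    have he : (Finset.range m).filter (fun i => p (i+1) - p i = ℓ + 1) = Finset.range r := by
      ext i
      simp only [Finset.mem_filter, Finset.mem_range, hgapval]
      constructor
      · rintro ⟨h1, h2⟩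
        split_ifs at h2 with h3 <;> omega
      · intro h1
        exact ⟨by omega, by rw [if_pos h1]⟩
    rw [he, Finset.card_range]
  exact ⟨C, hcard_a, hcard_b, by rw [hcard_set, hcount_ℓ], by rw [hcard_set, hcount_u]⟩


lemma fin2_other {a b x : Fin 2} (hab : a ≠ b) (hx : x ≠ a) : x = b := by
  fin_cases a <;> fin_cases b <;> fin_cases x <;> simp_all

/-- Sub-moment minimality of the two-value profile in the binary case: (i) an admissible cycle
realizing the two-value distance profile for symbol `a` exists, and (ii) any admissible cycle
with this profile minimizes the sum of squared distances over the instances of `a`. -/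
theorem submoment_min_binary (m₁ m₂ : ℕ) (h2 : 1 ≤ m₂) (h12 : m₂ ≤ m₁)
    (N : ℕ) (hN : N = m₁ + m₂) [NeZero N]
    (a : Fin 2) (hndvd : ¬ ![m₁, m₂] a ∣ N)
    (ℓ u : ℕ) (hℓ : ℓ = N / ![m₁, m₂] a) (hu : u = ℓ + 1) :
    (∃ C : ZMod N → Fin 2, Admissible ![m₁, m₂] C ∧
       (Finset.univ.filter (fun j => C j = a ∧ cycleDist C j = ℓ)).card
         = ![m₁, m₂] a * u - N ∧
       (Finset.univ.filter (fun j => C j = a ∧ cycleDist C j = u)).card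
         = N - ![m₁, m₂] a * ℓ) ∧
    (∀ C : ZMod N → Fin 2, Admissible ![m₁, m₂] C →
       (Finset.univ.filter (fun j => C j = a ∧ cycleDist C j = ℓ)).card
         = ![m₁, m₂] a * u - N →
       (Finset.univ.filter (fun j => C j = a ∧ cycleDist C j = u)).card
         = N - ![m₁, m₂] a * ℓ →
       ∀ C' : ZMod N → Fin 2, Admissible ![m₁, m₂] C' →
         ∑ j ∈ Finset.univ.filter (fun j => C j = a), cycleDist C j ^ 2 ≤
           ∑ j ∈ Finset.univ.filter (fun j => C' j = a), cycleDist C' j ^ 2) := by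
  have hm1 : 1 ≤ ![m₁, m₂] a := by fin_cases a <;> simp <;> omega
  have hmN : ![m₁, m₂] a ≤ N := by fin_cases a <;> simp <;> omega
  obtain ⟨b, hab, hmb⟩ : ∃ b : Fin 2, a ≠ b ∧ ![m₁, m₂] b = N - ![m₁, m₂] a := by
    fin_cases a
    · exact ⟨1, by decide, by simp; omega⟩
    · exact ⟨0, by decide, by simp; omega⟩
  set m := ![m₁, m₂] a with hmdef
  set r := N % m with hrdef
  have hNeq : N = m * ℓ + r := by
    rw [hℓ, hrdef]
    exact (Nat.div_add_mod N m).symm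
  have hr0 : 0 < r := by
    rcases Nat.eq_zero_or_pos r with h | h
    · exact absurd (Nat.dvd_of_mod_eq_zero h) hndvd
    · exact h
  have hrm : r < m := Nat.mod_lt N hm1
  have hℓ1 : 1 ≤ ℓ := by
    rw [hℓ]
    exact (Nat.one_le_div_iff hm1).mpr hmN
  have hmu : m * u = m * ℓ + m := by rw [hu]; ring
  have hcl : m * u - N = m - r := by omega
  have hcu : N - m * ℓ = r := by omega
  obtain ⟨C₀, hCa, hCb, hCℓ, hCu⟩ := exists_profile N m ℓ r hNeq hr0 hrm hℓ1 a b hab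
  constructor
  · refine ⟨C₀, ?_, by rw [hcl]; exact hCℓ, by rw [hu, hcu]; exact hCu⟩
    intro x
    by_cases hx : x = a
    · rw [hx]; exact hCa
    · rw [fin2_other hab hx, hCb, hmb]
  · intro C hAdm hfℓ hfu C' hAdm'
    rw [hcl] at hfℓ
    rw [hcu] at hfu
    set S := Finset.univ.filter (fun j => C j = a) with hS
    set Sl := Finset.univ.filter (fun j => C j = a ∧ cycleDist C j = ℓ) with hSl
    set Su := Finset.univ.filter (fun j => C j = a ∧ cycleDist C j = u) with hSu
    have hScard : S.card = m := hAdm a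
    have hsub_l : Sl ⊆ S := by
      intro j hj
      rw [hSl, Finset.mem_filter] at hj
      rw [hS, Finset.mem_filter]
      exact ⟨hj.1, hj.2.1⟩
    have hsub_u : Su ⊆ S := by
      intro j hj
      rw [hSu, Finset.mem_filter] at hj
      rw [hS, Finset.mem_filter]
      exact ⟨hj.1, hj.2.1⟩
    have hdisj : Disjoint Sl Su := by
      rw [Finset.disjoint_left]
      intro j hj hj'
      rw [hSl, Finset.mem_filter] at hj
      rw [hSu, Finset.mem_filter] at hj'
      omega
    have hunion : Sl ∪ Su = S := by
      apply Finset.eq_of_subset_of_card_le (Finset.union_subset hsub_l hsub_u)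
      rw [Finset.card_union_of_disjoint hdisj, hfℓ, hfu, hScard]
      omega
    have hsum_l : ∑ j ∈ Sl, cycleDist C j ^ 2 = (m - r) * ℓ ^ 2 := by
      have hc : ∀ j ∈ Sl, cycleDist C j ^ 2 = ℓ ^ 2 := by
        intro j hj
        rw [hSl, Finset.mem_filter] at hj
        rw [hj.2.2]
      rw [Finset.sum_congr rfl hc, Finset.sum_const, hfℓ, smul_eq_mul]
    have hsum_u : ∑ j ∈ Su, cycleDist C j ^ 2 = r * u ^ 2 := by
      have hc : ∀ j ∈ Su, cycleDist C j ^ 2 = u ^ 2 := by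
        intro j hj
        rw [hSu, Finset.mem_filter] at hj
        rw [hj.2.2]
      rw [Finset.sum_congr rfl hc, Finset.sum_const, hfu, smul_eq_mul]
    have hLHS : ∑ j ∈ S, cycleDist C j ^ 2 = (m - r) * ℓ ^ 2 + r * u ^ 2 := by
      rw [← hunion, Finset.sum_union hdisj, hsum_l, hsum_u]
    rw [hLHS]
    -- now the lower bound for C'
    set S' := Finset.univ.filter (fun j => C' j = a) with hS'
    have hS'card : S'.card = m := hAdm' a
    have hne' : ∃ s, C' s = a := by
      have : S'.Nonempty := Finset.card_pos.mp (by omega)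
      obtain ⟨s, hs⟩ := this
      rw [hS', Finset.mem_filter] at hs
      exact ⟨s, hs.2⟩
    have hsum' : ∑ j ∈ S', cycleDist C' j = N := sum_cycleDist_fiber C' a hne'
    have hineq := sum_sq_ge S' (fun j => cycleDist C' j) ℓ
    rw [← Nat.cast_sum] at hineq
    rw [hsum', hS'card] at hineq
    have hcast : ((((m : ℕ) - r) * ℓ ^ 2 + r * u ^ 2 : ℕ) : ℤ)
        = (2 * (ℓ:ℤ) + 1) * (N : ℤ) - (m : ℤ) * ((ℓ:ℤ) * ((ℓ:ℤ) + 1)) := by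
      have hNc : (N : ℤ) = (m : ℤ) * ℓ + r := by exact_mod_cast hNeq
      push_cast [Nat.cast_sub (le_of_lt hrm), hu]
      rw [hNc]
      ring
    have final : ((((m : ℕ) - r) * ℓ ^ 2 + r * u ^ 2 : ℕ) : ℤ)
        ≤ ((∑ j ∈ S', cycleDist C' j ^ 2 : ℕ) : ℤ) := by
      rw [hcast, Nat.cast_sum]
      push_cast
      push_cast at hineq
      linarith
    exact_mod_cast final
end

section
/- (Divisible binary case: the repeated block cycle is optimal) Let m₁ ≥ m₂ ≥ 1 be natural numbers with m₂ ∣ m₁, set q = m₁/m₂ and N = m₁ + m₂, and define the cycle C : ZMod N → {a₁, a₂} by C(j) = a₂ if j.val mod (q+1) = q and C(j) = a₁ otherwise (i.e., C repeats the block a₁^q a₂ exactly m₂ times). Then C is admissible with fibers of sizes m₁ and m₂, every instance of a₂ has Δ_C(j) = q + 1 = N/m₂, and C minimizes the variance over all admissible cycles with these multiplicities. -/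
open Finset

lemma cycleDist_spec {N : ℕ} [NeZero N] {A : Type*} (C : ZMod N → A) (j : ZMod N) :
    0 < cycleDist C j ∧ C (j + (cycleDist C j : ZMod N)) = C j :=
  Nat.sInf_mem (s := {d : ℕ | 0 < d ∧ C (j + (d : ZMod N)) = C j})
    ⟨N, Nat.pos_of_ne_zero (NeZero.ne N), by simp⟩

lemma cycleDist_le {N : ℕ} [NeZero N] {A : Type*} (C : ZMod N → A) (j : ZMod N)
    {d : ℕ} (hd : 0 < d) (h : C (j + (d : ZMod N)) = C j) : cycleDist C j ≤ d :=
  Nat.sInf_le ⟨hd, h⟩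

lemma cycleDist_min_s17 {N : ℕ} [NeZero N] {A : Type*} (C : ZMod N → A) (j : ZMod N)
    {d : ℕ} (hd : 0 < d) (hlt : d < cycleDist C j) : C (j + (d : ZMod N)) ≠ C j :=
  fun h => absurd (cycleDist_le C j hd h) (by omega)

lemma aux_three_mul_le (x : ℕ) : 3 * x ≤ x ^ 2 + 2 := by
  rcases Nat.lt_or_ge x 3 with h | h
  · interval_cases x <;> decide
  · have : 3 * x ≤ x * x := Nat.mul_le_mul_right x h
    nlinarith

lemma aux_card_mod {a c : ℕ} (b : ℕ) (hc : c < a) :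
    ((Finset.range (a * b)).filter (fun i => i % a = c)).card = b := by
  have ha : 0 < a := by omega
  have : ((Finset.range (a * b)).filter (fun i => i % a = c)).card
      = (Finset.range b).card := by
    apply Finset.card_nbij' (fun i => i / a) (fun x => a * x + c)
    · intro i hi
      simp only [mem_coe, mem_filter, mem_range] at hi
      simp only [mem_coe, mem_range]
      exact Nat.div_lt_of_lt_mul hi.1
    · intro x hx
      simp only [mem_coe, mem_range] at hx
      simp only [mem_coe, mem_filter, mem_range]
      refine ⟨?_, by simp [Nat.mul_add_mod, Nat.mod_eq_of_lt hc]⟩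
      calc a * x + c < a * x + a := by omega
        _ = a * (x + 1) := by ring
        _ ≤ a * b := Nat.mul_le_mul_left a (by omega)
    · intro i hi
      simp only [mem_coe, mem_filter, mem_range] at hi
      conv_rhs => rw [← Nat.div_add_mod i a]
      rw [hi.2]
    · intro x hx
      show (a * x + c) / a = x
      rw [Nat.mul_add_div ha, Nat.div_eq_of_lt hc]
      omega
  rw [this, Finset.card_range]

lemma aux_card_zmod {N : ℕ} [NeZero N] (P : ℕ → Prop) [DecidablePred P] :
    (Finset.univ.filter (fun j : ZMod N => P j.val)).card
      = ((Finset.range N).filter P).card := by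
  apply Finset.card_nbij' (fun j => ZMod.val j) (fun i => (i : ZMod N))
  · intro j hj
    simp only [mem_coe, mem_filter, mem_univ, true_and] at hj
    simp [mem_filter, mem_range, ZMod.val_lt j, hj]
  · intro i hi
    simp only [mem_coe, mem_filter, mem_range] at hi
    simp [mem_filter, ZMod.val_natCast_of_lt hi.1, hi.2]
  · intro j _
    exact ZMod.natCast_rightInverse j
  · intro i hi
    simp only [mem_coe, mem_filter, mem_range] at hi
    exact ZMod.val_natCast_of_lt hi.1

lemma aux_sum_fiber {N : ℕ} [NeZero N] {A : Type*} [DecidableEq A]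
    (C : ZMod N → A) (a : A) (j₀ : ZMod N) (hj₀ : C j₀ = a) :
    ∑ j ∈ Finset.univ.filter (fun j => C j = a), cycleDist C j = N := by
  have hNpos : 0 < N := Nat.pos_of_ne_zero (NeZero.ne N)
  classical
  set g : ZMod N → ℕ := fun k => sInf {t : ℕ | C (k - (t : ZMod N)) = a} with hgdef
  have hgne : ∀ k : ZMod N, C (k - (g k : ZMod N)) = a := by
    intro k
    apply Nat.sInf_mem (s := {t : ℕ | C (k - (t : ZMod N)) = a})
    refine ⟨(k - j₀).val, ?_⟩
    show C (k - ((k - j₀).val : ZMod N)) = a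
    rw [ZMod.natCast_rightInverse (k - j₀), sub_sub_cancel, hj₀]
  have hgmin : ∀ k : ZMod N, ∀ t, t < g k → C (k - (t : ZMod N)) ≠ a := by
    intro k t ht h
    have h2 : g k ≤ t := Nat.sInf_le h
    omega
  set f : ZMod N → ZMod N := fun k => k - (g k : ZMod N) with hfdef
  have hfa : ∀ k, C (f k) = a := hgne
  have hcard : ∀ j ∈ Finset.univ.filter (fun j => C j = a),
      (Finset.univ.filter (fun k => f k = j)).card = cycleDist C j := by
    intro j hj
    rw [mem_filter] at hj
    have hCj : C j = a := hj.2
    have hΔpos := (cycleDist_spec C j).1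
    have hΔspec := (cycleDist_spec C j).2
    have hΔN : cycleDist C j ≤ N := cycleDist_le C j hNpos (by simp)
    have key : Finset.univ.filter (fun k => f k = j)
        = (Finset.range (cycleDist C j)).image (fun s : ℕ => j + (s : ZMod N)) := by
      ext k
      simp only [mem_filter, mem_univ, true_and, mem_image, mem_range]
      constructor
      · intro hfk
        have hkj : k = j + (g k : ZMod N) := by
          rw [← hfk]; show k = k - _ + _; ring
        refine ⟨g k, ?_, hkj.symm⟩
        by_contra hge
        push_neg at hge
        obtain ⟨n, hn⟩ : ∃ n, g k = n := ⟨_, rfl⟩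
        rw [hn] at hkj hge
        have ht : n - cycleDist C j < g k := by rw [hn]; omega
        apply hgmin k _ ht
        have hcast : ((n : ℕ) : ZMod N)
            = ((n - cycleDist C j : ℕ) : ZMod N) + (cycleDist C j : ZMod N) := by
          rw [← Nat.cast_add, Nat.sub_add_cancel hge]
        have heq : k - ((n - cycleDist C j : ℕ) : ZMod N)
            = j + (cycleDist C j : ZMod N) := by
          rw [hkj, hcast]; ring
        rw [heq, hΔspec]; exact hCj
      · rintro ⟨s, hs, rfl⟩
        have hgs : g (j + (s : ZMod N)) = s := by
          refine le_antisymm (Nat.sInf_le ?_ : g (j + (s : ZMod N)) ≤ s) ?_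
          · show C (j + (s : ZMod N) - (s : ZMod N)) = a
            rw [add_sub_cancel_right, hCj]
          · by_contra hlt
            push_neg at hlt
            have hC : C (j + (s : ZMod N) - ((g (j + (s : ZMod N)) : ℕ) : ZMod N)) = a :=
              hgne _
            obtain ⟨t, htdef⟩ : ∃ t, g (j + (s : ZMod N)) = t := ⟨_, rfl⟩
            rw [htdef] at hC hlt
            have hcast : ((s : ℕ) : ZMod N)
                = ((s - t : ℕ) : ZMod N) + (t : ZMod N) := by
              rw [← Nat.cast_add, Nat.sub_add_cancel (le_of_lt hlt)]
            have hst : j + (s : ZMod N) - (t : ZMod N)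
                = j + ((s - t : ℕ) : ZMod N) := by
              rw [hcast]; ring
            rw [hst] at hC
            exact cycleDist_min_s17 C j (by omega) (by omega) (hC.trans hCj.symm)
        show j + (s : ZMod N) - (g (j + (s : ZMod N)) : ZMod N) = j
        rw [hgs, add_sub_cancel_right]
    rw [key, Finset.card_image_of_injOn, Finset.card_range]
    intro s hs t ht hst
    simp only [Finset.coe_range, Set.mem_Iio] at hs ht
    have hcast : (s : ZMod N) = (t : ZMod N) := by
      simpa using hst
    have hval := congrArg ZMod.val hcast
    rwa [ZMod.val_natCast_of_lt (lt_of_lt_of_le hs hΔN),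
      ZMod.val_natCast_of_lt (lt_of_lt_of_le ht hΔN)] at hval
  have hfib := Finset.card_eq_sum_card_fiberwise
    (s := (Finset.univ : Finset (ZMod N)))
    (t := Finset.univ.filter (fun j => C j = a)) (f := f)
    (fun k _ => by simp [hfa k])
  rw [Finset.card_univ, ZMod.card] at hfib
  rw [Finset.sum_congr rfl hcard] at hfib
  exact hfib.symm

/-- Divisible binary case: with `m₂ ∣ m₁` and `q = m₁/m₂`, the cycle repeating the block
`a₁^q a₂` exactly `m₂` times is admissible, every instance of `a₂` has distance
`q + 1 = N/m₂`, and it minimizes the variance over all admissible cycles. -/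
theorem divisible_binary_optimal (m₁ m₂ : ℕ) (h2 : 1 ≤ m₂) (h12 : m₂ ≤ m₁) (hdvd : m₂ ∣ m₁)
    (q : ℕ) (hq : q = m₁ / m₂) (N : ℕ) (hN : N = m₁ + m₂) [NeZero N]
    (C : ZMod N → Fin 2)
    (hCdef : ∀ j : ZMod N, C j = if j.val % (q + 1) = q then 1 else 0) :
    Admissible ![m₁, m₂] C ∧
    q + 1 = N / m₂ ∧
    (∀ j : ZMod N, C j = 1 → cycleDist C j = q + 1) ∧
    (∀ C' : ZMod N → Fin 2, Admissible ![m₁, m₂] C' →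
      cycleVariance C ≤ cycleVariance C') := by
  have hNpos : 0 < N := Nat.pos_of_ne_zero (NeZero.ne N)
  have hq1 : 1 ≤ q := by rw [hq]; exact (Nat.one_le_div_iff (by omega)).mpr h12
  have hm1 : m₁ = m₂ * q := by rw [hq, Nat.mul_div_cancel' hdvd]
  have hNeq : N = m₂ * (q + 1) := by rw [hN, hm1]; ring
  have hNeq' : N = (q + 1) * m₂ := by rw [hNeq, mul_comm]
  have hmodN : ∀ x : ℕ, x % N % (q + 1) = x % (q + 1) :=
    fun x => Nat.mod_mod_of_dvd x ⟨m₂, hNeq'⟩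
  have hvaladd : ∀ (j : ZMod N) (d : ℕ),
      (j + (d : ZMod N)).val % (q + 1) = (j.val % (q + 1) + d) % (q + 1) := by
    intro j d
    rw [ZMod.val_add, ZMod.val_natCast, hmodN, Nat.add_mod, hmodN d, Nat.add_mod_mod]
  have hC' : ∀ (j : ZMod N) (d : ℕ),
      C (j + (d : ZMod N)) = if (j.val % (q + 1) + d) % (q + 1) = q then 1 else 0 := by
    intro j d
    rw [hCdef, hvaladd]
  have hqself : q % (q + 1) = q := Nat.mod_eq_of_lt (by omega)
  -- distance at positions of symbol 1
  have hd1 : ∀ j : ZMod N, C j = 1 → cycleDist C j = q + 1 := by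
    intro j hj
    have hr : j.val % (q + 1) = q := by
      by_contra h
      rw [hCdef j, if_neg h] at hj
      exact absurd hj (by decide)
    have hmem : C (j + ((q + 1 : ℕ) : ZMod N)) = C j := by
      rw [hC', hCdef j, hr, Nat.add_mod_right, hqself]
    refine le_antisymm (cycleDist_le C j (by omega) hmem) ?_
    obtain ⟨hdpos, hdspec⟩ := cycleDist_spec C j
    rw [hC', hCdef j, hr, if_pos rfl] at hdspec
    have hcond : (q + cycleDist C j) % (q + 1) = q := by
      by_contra h
      rw [if_neg h] at hdspec
      exact absurd hdspec (by decide)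
    by_contra hlt
    push_neg at hlt
    have h1 : (q + cycleDist C j) % (q + 1) = cycleDist C j - 1 := by
      rw [Nat.mod_eq_sub_mod (by omega), Nat.mod_eq_of_lt (by omega)]
      omega
    omega
  -- distance 2 positions
  have hd2 : ∀ j : ZMod N, j.val % (q + 1) + 1 = q → cycleDist C j = 2 := by
    intro j hr
    have hj0 : C j = 0 := by rw [hCdef j, if_neg (by omega)]
    have h1ne : C (j + ((1 : ℕ) : ZMod N)) ≠ C j := by
      rw [hC', hj0, hr, if_pos hqself]
      decide
    have h0 : (j.val % (q + 1) + 2) % (q + 1) = 0 := by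
      rw [show j.val % (q + 1) + 2 = q + 1 by omega, Nat.mod_self]
    have hmem : C (j + ((2 : ℕ) : ZMod N)) = C j := by
      rw [hC', hj0, h0, if_neg (by omega)]
    have hle := cycleDist_le C j (by omega) hmem
    obtain ⟨hdpos, hdspec⟩ := cycleDist_spec C j
    have hne1 : cycleDist C j ≠ 1 := fun h => h1ne (h ▸ hdspec)
    omega
  -- distance 1 positions
  have hd3 : ∀ j : ZMod N, j.val % (q + 1) + 1 < q → cycleDist C j = 1 := by
    intro j hr
    have hj0 : C j = 0 := by rw [hCdef j, if_neg (by omega)]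
    have hrlt : j.val % (q + 1) < q + 1 := Nat.mod_lt _ (by omega)
    have hmem : C (j + ((1 : ℕ) : ZMod N)) = C j := by
      rw [hC', hj0, Nat.mod_eq_of_lt (by omega), if_neg (by omega)]
    have := cycleDist_le C j one_pos hmem
    have := (cycleDist_spec C j).1
    omega
  -- cardinalities for C
  have hcard1 : (Finset.univ.filter (fun j : ZMod N => C j = 1)).card = m₂ := by
    have heq : (Finset.univ.filter (fun j : ZMod N => C j = 1))
        = Finset.univ.filter (fun j : ZMod N => j.val % (q + 1) = q) := by
      apply Finset.filter_congr
      intro j _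
      rw [hCdef j]
      by_cases h : j.val % (q + 1) = q <;> simp [h]
    rw [heq, aux_card_zmod (fun x => x % (q + 1) = q), hNeq']
    exact aux_card_mod m₂ (by omega)
  have hcard0 : (Finset.univ.filter (fun j : ZMod N => C j = 0)).card = m₁ := by
    have hsplit := Finset.card_filter_add_card_filter_not
      (s := (Finset.univ : Finset (ZMod N))) (p := fun j => C j = 1)
    have hne : (Finset.univ.filter (fun j : ZMod N => ¬ C j = 1))
        = Finset.univ.filter (fun j : ZMod N => C j = 0) := by
      apply Finset.filter_congr
      intro j _
      have : ∀ x : Fin 2, (¬ x = 1) ↔ x = 0 := by decide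
      simp [this]
    rw [hne, Finset.card_univ, ZMod.card, hcard1] at hsplit
    omega
  have hadm : Admissible ![m₁, m₂] C := by
    intro a
    fin_cases a
    · simpa using hcard0
    · simpa using hcard1
  refine ⟨hadm, ?_, hd1, ?_⟩
  · rw [hNeq', Nat.mul_div_cancel _ (by omega)]
  -- exact value of the sum of squared distances for C
  have hfin2 : ∀ x : Fin 2, (¬ x = 0) ↔ x = 1 := by decide
  have hsq_split : ∀ D : ZMod N → Fin 2,
      ∑ j : ZMod N, (cycleDist D j) ^ 2
        = (∑ j ∈ Finset.univ.filter (fun j => D j = 0), (cycleDist D j) ^ 2)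
          + ∑ j ∈ Finset.univ.filter (fun j => D j = 1), (cycleDist D j) ^ 2 := by
    intro D
    rw [← Finset.sum_filter_add_sum_filter_not Finset.univ (fun j => D j = 0)
      (fun j => (cycleDist D j) ^ 2)]
    congr 1
    apply Finset.sum_congr _ (fun _ _ => rfl)
    apply Finset.filter_congr
    intro j _
    simp [hfin2]
  have htotC : ∑ j : ZMod N, (cycleDist C j) ^ 2 = m₁ + 3 * m₂ + m₂ * (q + 1) ^ 2 := by
    rw [hsq_split C]
    have hsum1 : ∑ j ∈ Finset.univ.filter (fun j => C j = 1), (cycleDist C j) ^ 2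
        = m₂ * (q + 1) ^ 2 := by
      rw [Finset.sum_congr rfl (fun j hj => by
        rw [hd1 j (Finset.mem_filter.mp hj).2]), Finset.sum_const, hcard1, smul_eq_mul]
    have hsum0 : ∑ j ∈ Finset.univ.filter (fun j => C j = 0), (cycleDist C j) ^ 2
        = m₁ + 3 * m₂ := by
      have hval : ∀ j ∈ Finset.univ.filter (fun j : ZMod N => C j = 0),
          (cycleDist C j) ^ 2 = if j.val % (q + 1) + 1 = q then 4 else 1 := by
        intro j hj
        have hj0 : C j = 0 := (Finset.mem_filter.mp hj).2
        have hr : j.val % (q + 1) ≠ q := by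
          intro h
          rw [hCdef j, if_pos h] at hj0
          exact absurd hj0 (by decide)
        have hrlt : j.val % (q + 1) < q + 1 := Nat.mod_lt _ (by omega)
        by_cases h : j.val % (q + 1) + 1 = q
        · rw [if_pos h, hd2 j h]; norm_num
        · rw [if_neg h, hd3 j (by omega)]; norm_num
      rw [Finset.sum_congr rfl hval, Finset.sum_ite, Finset.sum_const, Finset.sum_const,
        smul_eq_mul, smul_eq_mul]
      have hA : ((Finset.univ.filter (fun j : ZMod N => C j = 0)).filter
          (fun j => j.val % (q + 1) + 1 = q)).card = m₂ := by
        have heq2 : (Finset.univ.filter (fun j : ZMod N => C j = 0)).filter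
            (fun j => j.val % (q + 1) + 1 = q)
            = Finset.univ.filter (fun j : ZMod N => j.val % (q + 1) = q - 1) := by
          rw [Finset.filter_filter]
          apply Finset.filter_congr
          intro j _
          have hrlt : j.val % (q + 1) < q + 1 := Nat.mod_lt _ (by omega)
          constructor
          · rintro ⟨-, h⟩; omega
          · intro h
            have h1 : j.val % (q + 1) + 1 = q := by omega
            refine ⟨?_, h1⟩
            rw [hCdef j, if_neg (by omega)]
        rw [heq2, aux_card_zmod (fun x => x % (q + 1) = q - 1), hNeq']
        exact aux_card_mod m₂ (by omega)
      have hB : ((Finset.univ.filter (fun j : ZMod N => C j = 0)).filter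
          (fun j => ¬ j.val % (q + 1) + 1 = q)).card = m₁ - m₂ := by
        have hsplit := Finset.card_filter_add_card_filter_not
          (s := Finset.univ.filter (fun j : ZMod N => C j = 0))
          (p := fun j => j.val % (q + 1) + 1 = q)
        rw [hcard0, hA] at hsplit
        omega
      rw [hA, hB]
      omega
    rw [hsum0, hsum1]
  -- the mean of any admissible cycle is 2
  have hsum_all : ∀ D : ZMod N → Fin 2, Admissible ![m₁, m₂] D →
      ∑ j : ZMod N, cycleDist D j = 2 * N := by
    intro D hD
    have hc0 : (Finset.univ.filter (fun j : ZMod N => D j = 0)).card = m₁ := by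
      simpa using hD 0
    have hc1 : (Finset.univ.filter (fun j : ZMod N => D j = 1)).card = m₂ := by
      simpa using hD 1
    obtain ⟨j₀, hj₀⟩ := Finset.card_pos.mp (by omega : 0 < (Finset.univ.filter (fun j : ZMod N => D j = 0)).card)
    obtain ⟨j₁, hj₁⟩ := Finset.card_pos.mp (by omega : 0 < (Finset.univ.filter (fun j : ZMod N => D j = 1)).card)
    have hs0 := aux_sum_fiber D 0 j₀ (Finset.mem_filter.mp hj₀).2
    have hs1 := aux_sum_fiber D 1 j₁ (Finset.mem_filter.mp hj₁).2
    rw [← Finset.sum_filter_add_sum_filter_not Finset.univ (fun j => D j = 0)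
      (fun j => cycleDist D j), hs0]
    have : (Finset.univ.filter (fun j : ZMod N => ¬ D j = 0))
        = Finset.univ.filter (fun j : ZMod N => D j = 1) := by
      apply Finset.filter_congr
      intro j _
      simp [hfin2]
    rw [this, hs1]
    omega
  -- variance formula
  have hvar : ∀ D : ZMod N → Fin 2, Admissible ![m₁, m₂] D →
      cycleVariance D = ((∑ j : ZMod N, (cycleDist D j : ℚ) ^ 2) - 4 * N) / N := by
    intro D hD
    have hs := hsum_all D hD
    have hsQ : ∑ j : ZMod N, (cycleDist D j : ℚ) = 2 * N := by
      exact_mod_cast congrArg (Nat.cast : ℕ → ℚ) hs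
    have hNQ : (N : ℚ) ≠ 0 := Nat.cast_ne_zero.mpr (by omega)
    unfold cycleVariance cycleMean
    rw [hsQ]
    have h2q : (2 * (N : ℚ)) / N = 2 := by field_simp
    rw [h2q]
    congr 1
    calc ∑ j : ZMod N, ((cycleDist D j : ℚ) - 2) ^ 2
        = ∑ j : ZMod N, ((cycleDist D j : ℚ) ^ 2 - 4 * (cycleDist D j : ℚ) + 4) :=
          Finset.sum_congr rfl (fun j _ => by ring)
      _ = (∑ j : ZMod N, (cycleDist D j : ℚ) ^ 2)
            - 4 * (∑ j : ZMod N, (cycleDist D j : ℚ))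
            + (Fintype.card (ZMod N)) * 4 := by
          rw [Finset.sum_add_distrib, Finset.sum_sub_distrib, ← Finset.mul_sum,
            Finset.sum_const, nsmul_eq_mul, Finset.card_univ]
      _ = (∑ j : ZMod N, (cycleDist D j : ℚ) ^ 2) - 4 * N := by
          rw [hsQ, ZMod.card]; ring
  -- lower bound for an arbitrary admissible cycle
  intro C' hadm'
  have hc0' : (Finset.univ.filter (fun j : ZMod N => C' j = 0)).card = m₁ := by
    simpa using hadm' 0
  have hc1' : (Finset.univ.filter (fun j : ZMod N => C' j = 1)).card = m₂ := by
    simpa using hadm' 1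
  obtain ⟨j₀, hj₀⟩ := Finset.card_pos.mp (by omega : 0 < (Finset.univ.filter (fun j : ZMod N => C' j = 0)).card)
  obtain ⟨j₁, hj₁⟩ := Finset.card_pos.mp (by omega : 0 < (Finset.univ.filter (fun j : ZMod N => C' j = 1)).card)
  have hs0' := aux_sum_fiber C' 0 j₀ (Finset.mem_filter.mp hj₀).2
  have hs1' := aux_sum_fiber C' 1 j₁ (Finset.mem_filter.mp hj₁).2
  have hb1 : m₂ * (q + 1) ^ 2
      ≤ ∑ j ∈ Finset.univ.filter (fun j => C' j = 1), (cycleDist C' j) ^ 2 := by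
    have hcs := sq_sum_le_card_mul_sum_sq
      (s := Finset.univ.filter (fun j : ZMod N => C' j = 1))
      (f := fun j => cycleDist C' j)
    rw [hs1', hc1'] at hcs
    refine Nat.le_of_mul_le_mul_left ?_ (show 0 < m₂ by omega)
    calc m₂ * (m₂ * (q + 1) ^ 2) = N ^ 2 := by rw [hNeq]; ring
      _ ≤ m₂ * ∑ j ∈ Finset.univ.filter (fun j => C' j = 1), (cycleDist C' j) ^ 2 := hcs
  have hb0 : m₁ + 3 * m₂
      ≤ ∑ j ∈ Finset.univ.filter (fun j => C' j = 0), (cycleDist C' j) ^ 2 := by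
    have hsum := Finset.sum_le_sum
      (fun j (_ : j ∈ Finset.univ.filter (fun j : ZMod N => C' j = 0)) =>
        aux_three_mul_le (cycleDist C' j))
    rw [← Finset.mul_sum, hs0', Finset.sum_add_distrib, Finset.sum_const, hc0',
      smul_eq_mul] at hsum
    omega
  have htot' : m₁ + 3 * m₂ + m₂ * (q + 1) ^ 2 ≤ ∑ j : ZMod N, (cycleDist C' j) ^ 2 := by
    rw [hsq_split C']
    exact Nat.add_le_add hb0 hb1
  rw [hvar C hadm, hvar C' hadm']
  have hle : (∑ j : ZMod N, (cycleDist C j : ℚ) ^ 2)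
      ≤ ∑ j : ZMod N, (cycleDist C' j : ℚ) ^ 2 := by
    have : (∑ j : ZMod N, (cycleDist C j) ^ 2) ≤ ∑ j : ZMod N, (cycleDist C' j) ^ 2 := by
      rw [htotC]; exact htot'
    exact_mod_cast this
  have hNQ : (0 : ℚ) < N := by exact_mod_cast hNpos
  gcongr
end
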